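/- arXiv:2512.09689 — 3 statements merged into one kernel-verified Lean document; each statement's English description precedes it below -/
import Mathlib

section
/- Let V be a 2-dimensional real inner product space with basis {v₁, v₂} satisfying ⟨v₁, v₂⟩ ≤ 0. If v ∈ V satisfies ξⱼ(v) := ⟨v, vⱼ⟩/⟨vⱼ, vⱼ⟩ ≥ 0 for j = 1, 2, then ⟨v,v⟩ ≥ ξ₁(v)² ⟨v₁,v₁⟩² ⟨v₂,v₂⟩/(⟨v₁,v₁⟩⟨v₂,v₂⟩ − ⟨v₁,v₂⟩²) + ξ₂(v)² ⟨v₂,v₂⟩² ⟨v₁,v₁⟩/(⟨v₁,v₁⟩⟨v₂,v₂⟩ − ⟨v₁,v₂⟩²). -/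
lemma aux_pos {V : Type*} [NormedAddCommGroup V] [InnerProductSpace ℝ V]
    {x : V} (hx : x ≠ 0) : 0 < (inner ℝ x x : ℝ) :=
  lt_of_le_of_ne real_inner_self_nonneg (fun h => hx (inner_self_eq_zero.mp h.symm))

lemma aux_expand {V : Type*} [NormedAddCommGroup V] [InnerProductSpace ℝ V]
    (x y z : V) (α β : ℝ) :
    (inner ℝ (x - α • y - β • z) (x - α • y - β • z) : ℝ)
      = inner ℝ x x - 2 * α * inner ℝ x y - 2 * β * inner ℝ x z + α ^ 2 * inner ℝ y y
        + 2 * α * β * inner ℝ y z + β ^ 2 * inner ℝ z z := by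
  simp [inner_sub_left, inner_sub_right, real_inner_smul_left, real_inner_smul_right,
    real_inner_comm y x, real_inner_comm z x, real_inner_comm z y, -inner_self_eq_norm_sq_to_K]
  ring

/-- If {v₁,v₂} is a basis of a 2-dimensional real inner ℝ product space with
⟨v₁,v₂⟩ ≤ 0 and the coefficients ξⱼ(v) = ⟨v,vⱼ⟩/⟨vⱼ,vⱼ⟩ are nonnegative, then
⟨v,v⟩ dominates the sum of the two "diagonal" terms. -/
theorem stmt_1 {V : Type*} [NormedAddCommGroup V] [InnerProductSpace ℝ V]
    (hdim : Module.finrank ℝ V = 2) (v₁ v₂ : V)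
    (hli : LinearIndependent ℝ ![v₁, v₂])
    (hneg : (inner ℝ v₁ v₂ : ℝ) ≤ 0) (v : V)
    (hξ₁ : 0 ≤ (inner ℝ v v₁ / inner ℝ v₁ v₁ : ℝ))
    (hξ₂ : 0 ≤ (inner ℝ v v₂ / inner ℝ v₂ v₂ : ℝ)) :
    (inner ℝ v v : ℝ) ≥
      (inner ℝ v v₁ / inner ℝ v₁ v₁ : ℝ) ^ 2 * (inner ℝ v₁ v₁ : ℝ) ^ 2 * (inner ℝ v₂ v₂ : ℝ)
        / ((inner ℝ v₁ v₁ : ℝ) * (inner ℝ v₂ v₂ : ℝ) - (inner ℝ v₁ v₂ : ℝ) ^ 2)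
      + (inner ℝ v v₂ / inner ℝ v₂ v₂ : ℝ) ^ 2 * (inner ℝ v₂ v₂ : ℝ) ^ 2 * (inner ℝ v₁ v₁ : ℝ)
        / ((inner ℝ v₁ v₁ : ℝ) * (inner ℝ v₂ v₂ : ℝ) - (inner ℝ v₁ v₂ : ℝ) ^ 2) := by
  have hv₁ : v₁ ≠ 0 := by
    intro h; exact (hli.ne_zero 0) (by simpa using h)
  have hv₂ : v₂ ≠ 0 := by
    intro h; exact (hli.ne_zero 1) (by simpa using h)
  have hA : 0 < (inner ℝ v₁ v₁ : ℝ) := aux_pos hv₁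
  have hB : 0 < (inner ℝ v₂ v₂ : ℝ) := aux_pos hv₂
  -- strict Cauchy–Schwarz
  have hu : v₂ - ((inner ℝ v₁ v₂ : ℝ) / (inner ℝ v₁ v₁ : ℝ)) • v₁ ≠ 0 := by
    intro h
    have h2 : v₂ = ((inner ℝ v₁ v₂ : ℝ) / (inner ℝ v₁ v₁ : ℝ)) • v₁ := by
      have := sub_eq_zero.mp h; linear_combination (norm := module) this
    have : ¬ LinearIndependent ℝ ![v₁, v₂] := by
      rw [LinearIndependent.pair_iff' hv₁]
      push_neg
      exact ⟨_, h2.symm⟩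
    exact this (by simpa using hli)
  have hD : 0 < (inner ℝ v₁ v₁ : ℝ) * (inner ℝ v₂ v₂ : ℝ) - (inner ℝ v₁ v₂ : ℝ) ^ 2 := by
    have h0 := aux_pos hu
    rw [show v₂ - ((inner ℝ v₁ v₂ : ℝ) / (inner ℝ v₁ v₁ : ℝ)) • v₁
        = v₂ - ((inner ℝ v₁ v₂ : ℝ) / (inner ℝ v₁ v₁ : ℝ)) • v₁ - (0 : ℝ) • v₁ by
      simp, aux_expand] at h0
    have hA' := hA.ne'
    field_simp at h0
    rw [real_inner_comm v₁ v₂] at h0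
    nlinarith [h0, sq_nonneg (inner ℝ v₁ v₂ : ℝ), hA, mul_pos hA hA]
  set A : ℝ := inner ℝ v₁ v₁ with hAdef
  set B : ℝ := inner ℝ v₂ v₂ with hBdef
  set C : ℝ := inner ℝ v₁ v₂ with hCdef
  set a : ℝ := inner ℝ v v₁ with hadef
  set b : ℝ := inner ℝ v v₂ with hbdef
  have ha : 0 ≤ a := by
    have := mul_nonneg hξ₁ hA.le
    rwa [div_mul_cancel₀ _ hA.ne'] at this
  have hb : 0 ≤ b := by
    have := mul_nonneg hξ₂ hB.le
    rwa [div_mul_cancel₀ _ hB.ne'] at this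
  set D : ℝ := A * B - C ^ 2 with hDdef
  set α : ℝ := (a * B - b * C) / D with hαdef
  set β : ℝ := (b * A - a * C) / D with hβdef
  have h0 : (0 : ℝ) ≤ inner ℝ (v - α • v₁ - β • v₂) (v - α • v₁ - β • v₂) :=
    real_inner_self_nonneg
  rw [aux_expand, ← hadef, ← hbdef, ← hAdef, ← hBdef, ← hCdef] at h0
  have hid : ((inner ℝ v v : ℝ) - 2 * α * a - 2 * β * b + α ^ 2 * A + 2 * α * β * C
        + β ^ 2 * B) * D = (inner ℝ v v : ℝ) * D - (a ^ 2 * B - 2 * a * b * C + b ^ 2 * A) := by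
    rw [hαdef, hβdef]
    field_simp
    ring
  have h1 : (0 : ℝ) ≤ (inner ℝ v v : ℝ) * D - (a ^ 2 * B - 2 * a * b * C + b ^ 2 * A) := by
    rw [← hid]
    exact mul_nonneg h0 hD.le
  have hkey : (inner ℝ v v : ℝ) ≥ (a ^ 2 * B + b ^ 2 * A) / D := by
    rw [ge_iff_le, div_le_iff₀ hD]
    nlinarith [mul_nonneg (mul_nonneg ha hb) (neg_nonneg.mpr hneg), h1]
  have heq : (a / A) ^ 2 * A ^ 2 * B / D + (b / B) ^ 2 * B ^ 2 * A / D
      = (a ^ 2 * B + b ^ 2 * A) / D := by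
    rw [← add_div]
    congr 1
    field_simp
  rw [heq]
  exact hkey
end

section
/- Fix s ∈ {1,2}. For every ε > 0 there is a constant C_ε such that for all integers N ≥ 1 and all integers u, v, the number of triples (n₁, n₂, n₃) ∈ {0,...,N}³ with n₁ + n₂ + n₃ = u and n₁² + n₂² + n₃² = v is at most C_ε N^ε. -/
open Finset Real


/-- solutions of `t^2 + 3 ≡ 0 mod m` in `[0, m)`. -/
def stmt9sqrts (m : ℕ) : Finset ℕ :=
  (Finset.range m).filter fun t => (m:ℤ) ∣ (t:ℤ)^2 + 3

lemma stmt9sqrts_card (m : ℕ) (hm : 1 ≤ m) :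
    (stmt9sqrts m).card ≤ 2 * m.divisors.card := by
  rcases (stmt9sqrts m).eq_empty_or_nonempty with h | ⟨t₀, ht₀⟩
  · simp [h]
  · have hmZ : (1:ℤ) ≤ (m:ℤ) := by exact_mod_cast hm
    simp only [stmt9sqrts, mem_filter, mem_range] at ht₀
    obtain ⟨ht₀m, ht₀d⟩ := ht₀
    set f : ℕ → ℕ := fun t => Int.gcd (m:ℤ) ((t:ℤ) - (t₀:ℤ)) with hf
    have key : ∀ t ∈ stmt9sqrts m,
        ((f t : ℤ) ∣ (t:ℤ) - t₀) ∧ (f t ∣ m) ∧ ((↑(m / f t) : ℤ) ∣ (t:ℤ) + t₀) ∧ 0 < f t := by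
      intro t ht
      simp only [stmt9sqrts, mem_filter, mem_range] at ht
      obtain ⟨htm, htd⟩ := ht
      have h1 : (f t : ℤ) ∣ (t:ℤ) - t₀ := Int.gcd_dvd_right _ _
      have h2 : (f t : ℤ) ∣ (m:ℤ) := Int.gcd_dvd_left _ _
      have h2' : f t ∣ m := by exact_mod_cast h2
      have hpos : 0 < f t := by
        rcases Nat.eq_zero_or_pos (f t) with h0 | h
        · exfalso
          have := Int.gcd_eq_zero_iff.mp h0
          omega
        · exact h
      refine ⟨h1, h2', ?_, hpos⟩
      -- m ∣ (t-t₀)(t+t₀)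
      have hprod : (m:ℤ) ∣ ((t:ℤ) - t₀) * ((t:ℤ) + t₀) := by
        have : ((t:ℤ) - t₀) * ((t:ℤ) + t₀) = ((t:ℤ)^2 + 3) - ((t₀:ℤ)^2 + 3) := by ring
        rw [this]
        exact dvd_sub htd ht₀d
      have hco : Int.gcd ((m:ℤ) / f t) (((t:ℤ) - t₀) / f t) = 1 :=
        Int.gcd_div_gcd_div_gcd (by simpa [hf] using hpos)
      have hme : (m:ℤ) = (f t) * ((m:ℤ) / f t) := (Int.mul_ediv_cancel' h2).symm
      have hte : (t:ℤ) - t₀ = (f t) * (((t:ℤ) - t₀) / f t) := (Int.mul_ediv_cancel' h1).symm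
      have hdvd : ((m:ℤ) / f t) ∣ (((t:ℤ) - t₀) / f t) * ((t:ℤ) + t₀) := by
        have h' : (f t : ℤ) * ((m:ℤ) / f t) ∣ (f t : ℤ) * ((((t:ℤ) - t₀) / f t) * ((t:ℤ) + t₀)) := by
          rw [← hme, ← mul_assoc, ← hte]; exact hprod
        exact (mul_dvd_mul_iff_left (by exact_mod_cast hpos.ne' : (f t : ℤ) ≠ 0)).mp h'
      have : IsCoprime ((m:ℤ) / f t) (((t:ℤ) - t₀) / f t) := Int.isCoprime_iff_gcd_eq_one.mpr hco
      have := this.dvd_of_dvd_mul_left hdvd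
      have hcast : ((↑(m / f t) : ℤ)) = (m:ℤ) / f t := Int.natCast_ediv m (f t)
      rw [hcast]; exact this
    have := Finset.card_le_mul_card_image_of_maps_to (f := f) (t := m.divisors)
      (fun t ht => Nat.mem_divisors.mpr ⟨(key t ht).2.1, by omega⟩) 2 ?_
    · exact this
    intro d hd
    rcases ((stmt9sqrts m).filter fun t => f t = d).eq_empty_or_nonempty with h | ⟨t₁, ht₁⟩
    · simp [h]
    have ht₁' := ht₁
    simp only [mem_filter] at ht₁'
    obtain ⟨ht₁s, ht₁f⟩ := ht₁'
    obtain ⟨h1, h2, h3, hpos⟩ := key t₁ ht₁s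
    rw [ht₁f] at h1 h2 h3 hpos
    set e : ℕ := m / d with he
    have hde : d * e = m := Nat.mul_div_cancel' h2
    -- gg := gcd d e ≤ 2
    set gg : ℕ := Nat.gcd d e with hgg
    have hggd : gg ∣ d := Nat.gcd_dvd_left _ _
    have hgge : gg ∣ e := Nat.gcd_dvd_right _ _
    have hggpos : 0 < gg := Nat.gcd_pos_of_pos_left _ hpos
    have hgg2 : gg ≤ 2 := by
      have hgt : (gg:ℤ) ∣ 2 * t₀ := by
        have d1 : (gg:ℤ) ∣ (t₁:ℤ) - t₀ := dvd_trans (by exact_mod_cast hggd) h1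
        have d2 : (gg:ℤ) ∣ (t₁:ℤ) + t₀ := dvd_trans (by exact_mod_cast hgge) h3
        have : (2:ℤ) * t₀ = ((t₁:ℤ) + t₀) - ((t₁:ℤ) - t₀) := by ring
        rw [this]; exact dvd_sub d2 d1
      have hsq : (gg:ℤ) * gg ∣ (m:ℤ) := by
        have : (gg:ℤ) * gg ∣ (d:ℤ) * e := mul_dvd_mul (by exact_mod_cast hggd) (by exact_mod_cast hgge)
        rwa [show ((d:ℤ) * e) = (m:ℤ) by exact_mod_cast hde] at this
      have h12 : (gg:ℤ) * gg ∣ 12 := by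
        have ha : (gg:ℤ) * gg ∣ 4 * ((t₀:ℤ)^2 + 3) := dvd_mul_of_dvd_right (hsq.trans ht₀d) 4
        have hb : (gg:ℤ) * gg ∣ (2 * t₀) * (2 * t₀) := mul_dvd_mul hgt hgt
        have : (12:ℤ) = 4 * ((t₀:ℤ)^2 + 3) - (2 * t₀) * (2 * t₀) := by ring
        rw [this]; exact dvd_sub ha hb
      have h12' : gg * gg ∣ 12 := by exact_mod_cast h12
      have hle : gg * gg ≤ 12 := Nat.le_of_dvd (by norm_num) h12'
      have h3 : gg ≤ 3 := by nlinarith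
      interval_cases gg <;> omega
    -- q := m / gg ;  all fiber elements are congruent mod q
    set q : ℕ := m / gg with hq
    have hgq : gg * q = m := Nat.mul_div_cancel' (hggd.trans h2)
    have hqpos : 0 < q := Nat.div_pos (Nat.le_of_dvd (by omega) (hggd.trans h2)) hggpos
    have hlcm : Nat.lcm d e = q := by
      have := Nat.gcd_mul_lcm d e
      rw [hde] at this
      -- gg * lcm = m = gg * q
      have : gg * Nat.lcm d e = gg * q := by rw [hgq]; exact this
      exact Nat.eq_of_mul_eq_mul_left hggpos this
    have hcong : ∀ t ∈ (stmt9sqrts m).filter fun t => f t = d, t % q = t₁ % q ∧ t / q < 2 := by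
      intro t ht
      have ht' := ht
      simp only [mem_filter] at ht'
      obtain ⟨hts, htf⟩ := ht'
      obtain ⟨k1, k2, k3, _⟩ := key t hts
      rw [htf] at k1 k2 k3
      have c1 : (d:ℤ) ∣ (t:ℤ) - t₁ := by
        have : (t:ℤ) - t₁ = ((t:ℤ) - t₀) - ((t₁:ℤ) - t₀) := by ring
        rw [this]; exact dvd_sub k1 h1
      have c2 : (e:ℤ) ∣ (t:ℤ) - t₁ := by
        have : (t:ℤ) - t₁ = ((t:ℤ) + t₀) - ((t₁:ℤ) + t₀) := by ring
        rw [this]; exact dvd_sub k3 h3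
      have clcm : (q:ℤ) ∣ (t:ℤ) - t₁ := by
        have := Int.dvd_natAbs.mp (Int.ofNat_dvd.mpr (Int.lcm_dvd (Int.dvd_natAbs.mpr c1) (Int.dvd_natAbs.mpr c2)))
        rwa [show Int.lcm (d:ℤ) (e:ℤ) = q by rw [Int.lcm]; simp [hlcm]] at this
      constructor
      · have : (t:ℤ) % q = (t₁:ℤ) % q := Int.ModEq.symm (Int.modEq_iff_dvd.mpr clcm)
        have h1' : ((t % q : ℕ) : ℤ) = ((t₁ % q : ℕ) : ℤ) := by
          push_cast
          exact this
        exact_mod_cast h1'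
      · have htm : t < m := by
          simp only [stmt9sqrts, mem_filter, mem_range] at hts; exact hts.1
        have h2q : t < 2 * q := by
          calc t < m := htm
          _ = gg * q := hgq.symm
          _ ≤ 2 * q := Nat.mul_le_mul_right _ hgg2
        exact (Nat.div_lt_iff_lt_mul hqpos).mpr h2q
    have : ((stmt9sqrts m).filter fun t => f t = d).card ≤ (Finset.range 2).card := by
      apply Finset.card_le_card_of_injOn (fun t => t / q)
      · intro t ht
        simp only [mem_range]
        exact Finset.mem_coe.mpr (mem_range.mpr (hcong t ht).2)
      · intro a ha b hb hab
        have h1 := (hcong a ha).1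
        have h2 := (hcong b hb).1
        simp only at hab
        calc a = q * (a / q) + a % q := (Nat.div_add_mod a q).symm
        _ = q * (b / q) + b % q := by rw [hab, h1, h2]
        _ = b := Nat.div_add_mod b q
    simpa using this


noncomputable def stmt9reps (M : ℤ) : Finset (ℤ × ℤ) :=
  ((Finset.Icc (-M) M) ×ˢ (Finset.Icc (-M) M)).filter fun p => p.1^2 + 3*p.2^2 = M

lemma stmt9abs_le {x M : ℤ} (hM : 1 ≤ M) (h : x^2 ≤ M) : -M ≤ x ∧ x ≤ M := by
  constructor <;> nlinarith [sq_nonneg (x+1), sq_nonneg (x-1)]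

lemma stmt9mem_reps {M x y : ℤ} (hM : 1 ≤ M) :
    (x, y) ∈ stmt9reps M ↔ x^2 + 3*y^2 = M := by
  simp only [stmt9reps, mem_filter, mem_product, mem_Icc]
  constructor
  · exact fun h => h.2
  · intro h
    have hx : x^2 ≤ M := by nlinarith [sq_nonneg y]
    have hy : y^2 ≤ M := by nlinarith [sq_nonneg x]
    exact ⟨⟨stmt9abs_le hM hx, stmt9abs_le hM hy⟩, h⟩


lemma stmt9prim_card (m : ℕ) (hm : 1 ≤ m) :
    ((stmt9reps (m:ℤ)).filter fun p => Int.gcd p.1 p.2 = 1).card ≤ 2 * (stmt9sqrts m).card := by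
  haveI : NeZero m := ⟨by omega⟩
  set s := (stmt9reps (m:ℤ)).filter fun p => Int.gcd p.1 p.2 = 1 with hs
  have hmZ : (1:ℤ) ≤ (m:ℤ) := by exact_mod_cast hm
  -- basic facts about members of s
  have hmem : ∀ p ∈ s, p.1^2 + 3*p.2^2 = (m:ℤ) ∧ IsCoprime p.1 p.2 := by
    intro p hp
    simp only [hs, mem_filter] at hp
    exact ⟨((stmt9mem_reps hmZ).mp hp.1), Int.isCoprime_iff_gcd_eq_one.mpr hp.2⟩
  -- y is invertible mod m for (x,y) ∈ s
  have hunit : ∀ p ∈ s, IsUnit ((p.2 : ZMod m)) := by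
    intro p hp
    obtain ⟨heq, hco⟩ := hmem p hp
    have hco2 : IsCoprime p.2 (p.1^2 + p.2 * (3 * p.2)) :=
      (hco.symm.pow_right).add_mul_left_right (3 * p.2)
    have hco3 : IsCoprime p.2 (m:ℤ) := by
      rwa [show p.1^2 + p.2 * (3 * p.2) = p.1^2 + 3*p.2^2 by ring, heq] at hco2
    obtain ⟨a, b, hab⟩ := hco3
    refine IsUnit.of_mul_eq_one ((a : ZMod m)) ?_
    have hcast : ((a * p.2 + b * (m:ℤ) : ℤ) : ZMod m) = ((1:ℤ) : ZMod m) := by rw [hab]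
    push_cast at hcast
    rw [ZMod.natCast_self, mul_zero, add_zero] at hcast
    linear_combination hcast
  set f : ℤ × ℤ → ℕ := fun p => (((p.1 : ZMod m)) * ((p.2 : ZMod m))⁻¹).val with hf
  have hmaps : ∀ p ∈ s, f p ∈ stmt9sqrts m := by
    intro p hp
    obtain ⟨heq, hco⟩ := hmem p hp
    have hu := hunit p hp
    have hyy : ((p.2 : ZMod m)) * ((p.2 : ZMod m))⁻¹ = 1 := ZMod.mul_inv_of_unit _ hu
    simp only [stmt9sqrts, mem_filter, mem_range]
    constructor
    · exact ZMod.val_lt _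
    · have hval : ((f p : ℕ) : ZMod m) = ((p.1 : ZMod m)) * ((p.2 : ZMod m))⁻¹ := by
        simp only [hf, ZMod.natCast_val, ZMod.cast_id]
      rw [← ZMod.intCast_zmod_eq_zero_iff_dvd]
      push_cast
      rw [hval]
      have hcast : ((p.1^2 + 3*p.2^2 : ℤ) : ZMod m) = ((m:ℤ) : ZMod m) := by rw [heq]
      push_cast at hcast
      rw [ZMod.natCast_self] at hcast
      linear_combination (((p.2:ZMod m))⁻¹)^2 * hcast -
        3 * ((((p.2:ZMod m)) * ((p.2:ZMod m))⁻¹) + 1) * hyy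
  have := Finset.card_le_mul_card_image_of_maps_to hmaps 2 ?_
  · exact this
  intro b hb
  rcases (s.filter fun p => f p = b).eq_empty_or_nonempty with h | ⟨p₁, hp₁⟩
  · simp [h]
  have hp₁' := hp₁
  simp only [mem_filter] at hp₁'
  obtain ⟨hp₁s, hp₁f⟩ := hp₁'
  have hsub : (s.filter fun p => f p = b) ⊆ {p₁, (-p₁.1, -p₁.2)} := by
    intro p hp
    simp only [mem_filter] at hp
    obtain ⟨hps, hpf⟩ := hp
    obtain ⟨heq, hco⟩ := hmem p hps
    obtain ⟨heq₁, hco₁⟩ := hmem p₁ hp₁s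
    have hu := hunit p hps
    have hu₁ := hunit p₁ hp₁s
    have hyy : ((p.2 : ZMod m)) * ((p.2 : ZMod m))⁻¹ = 1 := ZMod.mul_inv_of_unit _ hu
    have hyy₁ : ((p₁.2 : ZMod m)) * ((p₁.2 : ZMod m))⁻¹ = 1 := ZMod.mul_inv_of_unit _ hu₁
    -- equal vals ⇒ equal elements of ZMod m
    have hvz : ((p.1 : ZMod m)) * ((p.2 : ZMod m))⁻¹ = ((p₁.1 : ZMod m)) * ((p₁.2 : ZMod m))⁻¹ := by
      have hvv : f p = f p₁ := by rw [hpf, hp₁f]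
      have := congrArg (fun t : ℕ => (t : ZMod m)) hvv
      simpa only [hf, ZMod.natCast_val, ZMod.cast_id] using this
    have hBz : ((p.1 * p₁.2 - p₁.1 * p.2 : ℤ) : ZMod m) = 0 := by
      push_cast
      linear_combination ((p.2:ZMod m)) * ((p₁.2:ZMod m)) * hvz
        - ((p.1:ZMod m)) * ((p₁.2:ZMod m)) * hyy + ((p₁.1:ZMod m)) * ((p.2:ZMod m)) * hyy₁
    have hBdvd : (m:ℤ) ∣ p.1 * p₁.2 - p₁.1 * p.2 :=
      (ZMod.intCast_zmod_eq_zero_iff_dvd _ m).mp hBz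
    set B : ℤ := p.1 * p₁.2 - p₁.1 * p.2 with hB
    have hident : (p.1 * p₁.1 + 3 * p.2 * p₁.2)^2 + 3 * B^2 = (m:ℤ)^2 := by
      have : (p.1 * p₁.1 + 3 * p.2 * p₁.2)^2 + 3 * B^2
          = (p.1^2 + 3*p.2^2) * (p₁.1^2 + 3*p₁.2^2) := by ring
      rw [this, heq, heq₁]; ring
    have hB0 : B = 0 := by
      by_contra hB0
      have : (m:ℤ) ≤ |B| := Int.le_of_dvd (abs_pos.mpr hB0) ((dvd_abs _ _).mpr hBdvd)
      nlinarith [sq_nonneg (p.1 * p₁.1 + 3 * p.2 * p₁.2), sq_abs B]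
    -- from B = 0 conclude p = ± p₁
    have key : p = p₁ ∨ p = (-p₁.1, -p₁.2) := by
      have hxy : p.1 * p₁.2 = p₁.1 * p.2 := by
        have := hB0
        rw [hB] at this
        linarith
      rcases eq_or_ne p.2 0 with h20 | h20
      · have h120 : p.1 = 0 ∨ p₁.2 = 0 :=
          mul_eq_zero.mp (show p.1 * p₁.2 = 0 by rw [hxy, h20, mul_zero])
        have hx1 : p.1^2 = (m:ℤ) := by rw [← heq, h20]; ring
        rcases h120 with h10 | h120
        · exfalso
          have : (0:ℤ) = (m:ℤ) := by rw [← hx1, h10]; ring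
          linarith
        · have hx1' : p₁.1^2 = (m:ℤ) := by rw [← heq₁, h120]; ring
          have hzero : (p.1 - p₁.1) * (p.1 + p₁.1) = 0 := by nlinarith
          rcases mul_eq_zero.mp hzero with h | h
          · exact Or.inl (Prod.ext (by linarith) (by rw [h20, h120]))
          · exact Or.inr (Prod.ext (by simp only; linarith) (by simp only [h20, h120]; ring))
      · have d1 : p.2 ∣ p₁.2 := (hco.symm).dvd_of_dvd_mul_left
          ⟨p₁.1, by linear_combination hxy⟩
        have d2 : p₁.2 ∣ p.2 := (hco₁.symm).dvd_of_dvd_mul_left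
          ⟨p.1, by linear_combination - hxy⟩
        rcases Int.associated_iff.mp (associated_of_dvd_dvd d2 d1) with h | h
        · -- p₁.2 = p.2
          left
          have hx2 : (p.1 - p₁.1) * p.2 = 0 := by linear_combination hxy - p.1 * h
          rcases mul_eq_zero.mp hx2 with h' | h'
          · exact Prod.ext (by linarith) h.symm
          · exact absurd h' h20
        · -- p₁.2 = -p.2
          right
          have hx2 : (p.1 + p₁.1) * p.2 = 0 := by linear_combination - hxy + p.1 * h
          rcases mul_eq_zero.mp hx2 with h' | h'
          · exact Prod.ext (by simp only; linarith) (by simp only; linarith)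
          · exact absurd h' h20
    have : p ∈ ({p₁, (-p₁.1, -p₁.2)} : Finset (ℤ × ℤ)) := by
      rcases key with h | h <;> simp [h]
    exact this
  calc (s.filter fun p => f p = b).card ≤ ({p₁, (-p₁.1, -p₁.2)} : Finset (ℤ × ℤ)).card :=
        Finset.card_le_card hsub
  _ ≤ 2 := Finset.card_insert_le _ _ |>.trans (by simp)

lemma stmt9reps_card (M : ℕ) (hM : 1 ≤ M) :
    (stmt9reps (M:ℤ)).card ≤ 4 * M.divisors.card * M.divisors.card := by
  have hMZ : (1:ℤ) ≤ (M:ℤ) := by exact_mod_cast hM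
  set f : ℤ × ℤ → ℕ := fun p => Int.gcd p.1 p.2 with hf
  have hbasic : ∀ p ∈ stmt9reps (M:ℤ), p.1^2 + 3*p.2^2 = (M:ℤ) ∧ 0 < f p ∧ (f p)^2 ∣ M := by
    intro p hp
    have heq : p.1^2 + 3*p.2^2 = (M:ℤ) := by
      have := (stmt9mem_reps hMZ (x := p.1) (y := p.2)).mp (by simpa using hp)
      exact this
    have hx : (f p : ℤ) ∣ p.1 := Int.gcd_dvd_left _ _
    have hy : (f p : ℤ) ∣ p.2 := Int.gcd_dvd_right _ _
    have hsq : ((f p : ℤ))^2 ∣ (M:ℤ) := by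
      rw [← heq]
      exact dvd_add (by exact pow_dvd_pow_of_dvd hx 2)
        (dvd_mul_of_dvd_right (pow_dvd_pow_of_dvd hy 2) 3)
    have hpos : 0 < f p := by
      rcases Nat.eq_zero_or_pos (f p) with h0 | h
      · exfalso
        obtain ⟨h1, h2⟩ := Int.gcd_eq_zero_iff.mp h0
        rw [h1, h2] at heq
        simp at heq
        omega
      · exact h
    exact ⟨heq, hpos, by exact_mod_cast hsq⟩
  apply Finset.card_le_mul_card_image_of_maps_to (f := f) (t := M.divisors)
  · intro p hp
    obtain ⟨heq, hpos, hsq⟩ := hbasic p hp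
    exact Nat.mem_divisors.mpr ⟨(dvd_pow_self (f p) two_ne_zero).trans hsq, by omega⟩
  · intro g hg
    rcases ((stmt9reps (M:ℤ)).filter fun p => f p = g).eq_empty_or_nonempty with h | ⟨p₀, hp₀⟩
    · simp [h]
    have hp₀' := hp₀
    simp only [mem_filter] at hp₀'
    obtain ⟨hp₀s, hp₀f⟩ := hp₀'
    obtain ⟨_, hgpos', hgsq⟩ := hbasic p₀ hp₀s
    rw [hp₀f] at hgpos' hgsq
    set m : ℕ := M / g^2 with hm
    have hmg : g^2 * m = M := Nat.mul_div_cancel' hgsq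
    have hm1 : 1 ≤ m := by
      rcases Nat.eq_zero_or_pos m with h0 | h
      · rw [h0, mul_zero] at hmg; omega
      · exact h
    have hmZ : (1:ℤ) ≤ (m:ℤ) := by exact_mod_cast hm1
    -- fiber injects into primitive reps of m
    have hcard : ((stmt9reps (M:ℤ)).filter fun p => f p = g).card ≤
        ((stmt9reps (m:ℤ)).filter fun p => Int.gcd p.1 p.2 = 1).card := by
      apply Finset.card_le_card_of_injOn (fun p : ℤ × ℤ => ((p.1 / (g:ℤ), p.2 / (g:ℤ)) : ℤ × ℤ))
      · intro p hp
        simp only [Finset.mem_coe, mem_filter] at hp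
        obtain ⟨hps, hpf⟩ := hp
        obtain ⟨heq, hpos, _⟩ := hbasic p hps
        rw [hpf] at hpos
        have hgx : (g:ℤ) ∣ p.1 := by rw [← hpf]; exact Int.gcd_dvd_left _ _
        have hgy : (g:ℤ) ∣ p.2 := by rw [← hpf]; exact Int.gcd_dvd_right _ _
        have hgZ : (g:ℤ) ≠ 0 := by exact_mod_cast hpos.ne'
        have heq' : (p.1 / g)^2 + 3*(p.2 / g)^2 = (m:ℤ) := by
          obtain ⟨x', hx'⟩ := hgx
          obtain ⟨y', hy'⟩ := hgy
          rw [hx', hy', Int.mul_ediv_cancel_left _ hgZ, Int.mul_ediv_cancel_left _ hgZ]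
          have hMm : (M:ℤ) = (g:ℤ)^2 * m := by exact_mod_cast hmg.symm
          have : (g:ℤ)^2 * (x'^2 + 3*y'^2) = (g:ℤ)^2 * m := by
            rw [← hMm, ← heq, hx', hy']; ring
          exact mul_left_cancel₀ (pow_ne_zero 2 hgZ) this
        have hco : Int.gcd (p.1 / g) (p.2 / g) = 1 := by
          have := Int.gcd_div_gcd_div_gcd (i := p.1) (j := p.2)
            (by rw [show Int.gcd p.1 p.2 = g from hpf]; exact hpos)
          rwa [show Int.gcd p.1 p.2 = (g:ℕ) from hpf] at this
        exact mem_filter.mpr ⟨(stmt9mem_reps hmZ).mpr heq', hco⟩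
      · intro a ha b hb hab
        simp only [Finset.mem_coe, mem_filter] at ha hb
        have hga : (g:ℤ) ∣ a.1 := by rw [← ha.2]; exact Int.gcd_dvd_left _ _
        have hga2 : (g:ℤ) ∣ a.2 := by rw [← ha.2]; exact Int.gcd_dvd_right _ _
        have hgb : (g:ℤ) ∣ b.1 := by rw [← hb.2]; exact Int.gcd_dvd_left _ _
        have hgb2 : (g:ℤ) ∣ b.2 := by rw [← hb.2]; exact Int.gcd_dvd_right _ _
        have hgZ : (g:ℤ) ≠ 0 := by
          obtain ⟨_, hpos, _⟩ := hbasic a ha.1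
          rw [ha.2] at hpos
          exact_mod_cast hpos.ne'
        have h1 : a.1 = b.1 := by
          obtain ⟨xa, hxa⟩ := hga; obtain ⟨xb, hxb⟩ := hgb
          have := congrArg Prod.fst hab
          simp only [hxa, hxb, Int.mul_ediv_cancel_left _ hgZ] at this
          rw [hxa, hxb, this]
        have h2 : a.2 = b.2 := by
          obtain ⟨ya, hya⟩ := hga2; obtain ⟨yb, hyb⟩ := hgb2
          have := congrArg Prod.snd hab
          simp only [hya, hyb, Int.mul_ediv_cancel_left _ hgZ] at this
          rw [hya, hyb, this]
        exact Prod.ext h1 h2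
    calc ((stmt9reps (M:ℤ)).filter fun p => f p = g).card
        ≤ ((stmt9reps (m:ℤ)).filter fun p => Int.gcd p.1 p.2 = 1).card := hcard
      _ ≤ 2 * (stmt9sqrts m).card := stmt9prim_card m hm1
      _ ≤ 2 * (2 * m.divisors.card) := by
          have := stmt9sqrts_card m hm1
          omega
      _ ≤ 4 * M.divisors.card := by
          have hsub : m.divisors ⊆ M.divisors :=
            Nat.divisors_subset_of_dvd (by omega) ⟨g^2, by rw [← hmg]; ring⟩
          have := Finset.card_le_card hsub
          omega


lemma stmt9div_bound (ε : ℝ) (hε : 0 < ε) :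
    ∃ C : ℝ, 1 ≤ C ∧ ∀ n : ℕ, 1 ≤ n → (n.divisors.card : ℝ) ≤ C * (n:ℝ) ^ ε := by
  have hlog2 : (0:ℝ) < Real.log 2 := Real.log_pos (by norm_num)
  set K : ℝ := max 1 (2 / (ε * Real.log 2)) with hK
  have hK1 : (1:ℝ) ≤ K := le_max_left _ _
  have hK2 : 2 ≤ K * (ε * Real.log 2) := by
    have : 2 / (ε * Real.log 2) ≤ K := le_max_right _ _
    calc (2:ℝ) = (2 / (ε * Real.log 2)) * (ε * Real.log 2) := by
          field_simp
      _ ≤ K * (ε * Real.log 2) := by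
          apply mul_le_mul_of_nonneg_right this
          positivity
  set B : ℕ := Nat.ceil ((2:ℝ) ^ (1/ε : ℝ)) with hB
  refine ⟨K ^ (B + 1), one_le_pow₀ hK1, ?_⟩
  intro n hn
  have hn0 : n ≠ 0 := by omega
  -- factor-wise bounds
  have fact1 : ∀ p a : ℕ, 2 ≤ p → ((a:ℝ) + 1) ≤ K * (((p:ℝ) ^ a) ^ ε) := by
    intro p a hp
    have hpa : ((2:ℝ) ^ a) ^ ε ≤ ((p:ℝ) ^ a) ^ ε := by
      apply Real.rpow_le_rpow (by positivity)
      · apply pow_le_pow_left₀ (by norm_num)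
        exact_mod_cast hp
      · exact hε.le
    have h2a : (1:ℝ) + a * ε * Real.log 2 ≤ ((2:ℝ) ^ a) ^ ε := by
      have : ((2:ℝ) ^ a) ^ ε = Real.exp ((a * ε) * Real.log 2) := by
        rw [← Real.rpow_natCast 2 a, ← Real.rpow_mul (by norm_num),
          Real.rpow_def_of_pos (by norm_num)]
        ring_nf
      rw [this]
      have := Real.add_one_le_exp ((a * ε) * Real.log 2)
      linarith
    rcases Nat.eq_zero_or_pos a with h0 | ha
    · subst h0; simpa using le_trans hK1 (by nlinarith)
    · have ha1 : (1:ℝ) ≤ (a:ℝ) := by exact_mod_cast ha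
      have hmul : 2 * (a:ℝ) ≤ (K * (ε * Real.log 2)) * a := by
        apply mul_le_mul_of_nonneg_right hK2
        positivity
      nlinarith
  have fact2 : ∀ p a : ℕ, B + 1 ≤ p → ((a:ℝ) + 1) ≤ ((p:ℝ) ^ a) ^ ε := by
    intro p a hp
    have hpP : (2:ℝ) ^ (1/ε : ℝ) ≤ (p:ℝ) := by
      calc (2:ℝ) ^ (1/ε : ℝ) ≤ (B:ℝ) := Nat.le_ceil _
        _ ≤ (p:ℝ) := by exact_mod_cast Nat.le_of_succ_le hp
    have hp2 : (2:ℝ) ≤ (p:ℝ) ^ ε := by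
      calc (2:ℝ) = ((2:ℝ) ^ (1/ε : ℝ)) ^ ε := by
            rw [← Real.rpow_mul (by norm_num), one_div_mul_cancel hε.ne', Real.rpow_one]
        _ ≤ (p:ℝ) ^ ε := Real.rpow_le_rpow (by positivity) hpP hε.le
    have hswap : ((p:ℝ) ^ a) ^ ε = ((p:ℝ) ^ ε) ^ a := by
      rw [← Real.rpow_natCast (p:ℝ) a, ← Real.rpow_mul (by positivity),
        mul_comm, Real.rpow_mul (by positivity), Real.rpow_natCast]
    rw [hswap]
    calc ((a:ℝ) + 1) ≤ (2:ℝ) ^ a := by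
          have := Nat.lt_two_pow_self (n := a)
          have : (a:ℝ) + 1 ≤ ((2:ℕ) ^ a : ℕ) := by exact_mod_cast this
          simpa using this
      _ ≤ ((p:ℝ) ^ ε) ^ a := pow_le_pow_left₀ (by norm_num) hp2 a
  -- the product decomposition
  have hd : (n.divisors.card : ℝ) = ∏ p ∈ n.primeFactors, ((n.factorization p : ℝ) + 1) := by
    rw [Nat.card_divisors hn0]
    push_cast
    rfl
  have hnprod : (n:ℝ) ^ ε = ∏ p ∈ n.primeFactors, (((p:ℝ) ^ (n.factorization p)) ^ ε) := by
    have h1 : (n:ℝ) = ∏ p ∈ n.primeFactors, ((p:ℝ) ^ (n.factorization p)) := by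
      have := Nat.factorization_prod_pow_eq_self hn0
      calc (n:ℝ) = ((n.factorization.prod fun p k => p ^ k : ℕ) : ℝ) := by rw [this]
        _ = _ := by
          rw [Nat.prod_factorization_eq_prod_primeFactors]
          push_cast
          rfl
    rw [h1, ← Real.finset_prod_rpow _ _ (fun p _ => by positivity) ε]
  set c : ℕ → ℝ := fun p => if p ≤ B then K else 1 with hc
  have hstep : (n.divisors.card : ℝ) ≤
      (∏ p ∈ n.primeFactors, c p) * (n:ℝ) ^ ε := by
    rw [hd, hnprod, ← Finset.prod_mul_distrib]
    apply Finset.prod_le_prod (fun p _ => by positivity)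
    intro p hp
    have hp2 : 2 ≤ p := (Nat.prime_of_mem_primeFactors hp).two_le
    by_cases hpB : p ≤ B
    · simp only [hc, if_pos hpB]
      exact fact1 p _ hp2
    · simp only [hc, if_neg hpB]
      rw [one_mul]
      exact fact2 p _ (by omega)
  have hcprod : (∏ p ∈ n.primeFactors, c p) ≤ K ^ (B + 1) := by
    have h1 : (∏ p ∈ n.primeFactors, c p) = K ^ ((n.primeFactors.filter (· ≤ B)).card) := by
      rw [← Finset.prod_filter_mul_prod_filter_not n.primeFactors (· ≤ B)]
      have e1 : ∏ p ∈ n.primeFactors.filter (· ≤ B), c p = K ^ ((n.primeFactors.filter (· ≤ B)).card) := by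
        rw [Finset.prod_congr rfl (fun p hp => ?_), Finset.prod_const]
        simp only [Finset.mem_filter] at hp
        simp [hc, hp.2]
      have e2 : ∏ p ∈ n.primeFactors.filter (fun p => ¬ p ≤ B), c p = 1 := by
        apply Finset.prod_eq_one
        intro p hp
        simp only [Finset.mem_filter] at hp
        simp [hc, hp.2]
      rw [e1, e2, mul_one]
    rw [h1]
    apply pow_le_pow_right₀ hK1
    calc (n.primeFactors.filter (· ≤ B)).card ≤ (Finset.range (B+1)).card := by
          apply Finset.card_le_card
          intro p hp
          simp only [Finset.mem_filter] at hp
          simp only [Finset.mem_range]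
          omega
      _ = B + 1 := Finset.card_range _
  calc (n.divisors.card : ℝ) ≤ (∏ p ∈ n.primeFactors, c p) * (n:ℝ) ^ ε := hstep
    _ ≤ K ^ (B + 1) * (n:ℝ) ^ ε := by
        apply mul_le_mul_of_nonneg_right hcprod
        positivity

lemma stmt9zero {a b M : ℤ} (hM : M ≤ 0) (h : a^2 + 3*b^2 = M) : a = 0 ∧ b = 0 := by
  constructor <;> nlinarith [sq_nonneg a, sq_nonneg b]

/-- For every ε > 0 there is C_ε such that for all N ≥ 1 and all integers u, v,
the number of triples (n₁,n₂,n₃) ∈ {0,…,N}³ with n₁+n₂+n₃ = u and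
n₁²+n₂²+n₃² = v is at most C_ε N^ε. -/
theorem stmt_9 (s : ℤ) (hs : s = 1 ∨ s = 2) (ε : ℝ) (hε : 0 < ε) :
    ∃ C : ℝ, 0 < C ∧ ∀ N : ℕ, 1 ≤ N → ∀ u v : ℤ,
      (Nat.card {t : ℤ × ℤ × ℤ //
          (0 ≤ t.1 ∧ t.1 ≤ (N : ℤ)) ∧ (0 ≤ t.2.1 ∧ t.2.1 ≤ (N : ℤ)) ∧
          (0 ≤ t.2.2 ∧ t.2.2 ≤ (N : ℤ)) ∧
          t.1 + t.2.1 + t.2.2 = u ∧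
          t.1 ^ 2 + t.2.1 ^ 2 + t.2.2 ^ 2 = v} : ℝ)
        ≤ C * (N : ℝ) ^ ε := by
  obtain ⟨C₁, hC₁, hdiv⟩ := stmt9div_bound (ε/4) (by positivity)
  set C : ℝ := 4 * C₁^2 * (54:ℝ) ^ (ε/2 : ℝ) + 1 with hC
  have hCpos : 0 < C := by positivity
  refine ⟨C, hCpos, ?_⟩
  intro N hN u v
  have hN1 : (1:ℝ) ≤ (N:ℝ) := by exact_mod_cast hN
  have hNe : (1:ℝ) ≤ (N:ℝ) ^ ε := Real.one_le_rpow hN1 hε.le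
  set T := {t : ℤ × ℤ × ℤ //
          (0 ≤ t.1 ∧ t.1 ≤ (N : ℤ)) ∧ (0 ≤ t.2.1 ∧ t.2.1 ≤ (N : ℤ)) ∧
          (0 ≤ t.2.2 ∧ t.2.2 ≤ (N : ℤ)) ∧
          t.1 + t.2.1 + t.2.2 = u ∧
          t.1 ^ 2 + t.2.1 ^ 2 + t.2.2 ^ 2 = v} with hT
  set M : ℤ := 18*v - 6*u^2 with hM
  -- the key algebraic identity
  have hkey : ∀ t : T, (6*t.1.1 + 3*t.1.2.1 - 3*u)^2 + 3*(3*t.1.2.1 - u)^2 = M := by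
    rintro ⟨⟨n₁, n₂, n₃⟩, h⟩
    obtain ⟨_, _, _, hsum, hsq⟩ := h
    simp only at hsum hsq ⊢
    rw [hM]
    linear_combination (18*(n₁ + n₂ - n₃ - u)) * hsum + 18 * hsq
  have hinj : ∀ t t' : T, (6*t.1.1 + 3*t.1.2.1 - 3*u = 6*t'.1.1 + 3*t'.1.2.1 - 3*u)
      → (3*t.1.2.1 - u = 3*t'.1.2.1 - u) → t = t' := by
    rintro ⟨⟨n₁, n₂, n₃⟩, h⟩ ⟨⟨n₁', n₂', n₃'⟩, h'⟩ h1 h2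
    simp only at h1 h2
    obtain ⟨_, _, _, hsum, _⟩ := h
    obtain ⟨_, _, _, hsum', _⟩ := h'
    have e2 : n₂ = n₂' := by omega
    have e1 : n₁ = n₁' := by omega
    have e3 : n₃ = n₃' := by simp only at hsum hsum'; omega
    subst e1; subst e2; subst e3; rfl
  rcases isEmpty_or_nonempty T with hemp | ⟨⟨t₀, ht₀⟩⟩
  · rw [Nat.card_of_isEmpty]
    push_cast
    positivity
  rcases le_or_gt M 0 with hM0 | hM1
  · -- at most one solution
    have hsub : Subsingleton T := by
      constructor
      intro t t'
      have k1 := hkey t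
      have k2 := hkey t'
      have z1 := stmt9zero hM0 k1
      have z2 := stmt9zero hM0 k2
      exact hinj t t' (by omega) (by omega)
    have : Nat.card T ≤ 1 := by
      haveI := hsub
      haveI : Finite T := Finite.of_subsingleton
      exact Finite.card_le_one_iff_subsingleton.mpr hsub
    have h1 : (Nat.card T : ℝ) ≤ 1 := by exact_mod_cast this
    calc (Nat.card T : ℝ) ≤ 1 := h1
      _ ≤ C * (N:ℝ) ^ ε := by
          calc (1:ℝ) = 1 * 1 := by ring
          _ ≤ C * (N:ℝ) ^ ε := by
              apply mul_le_mul ?_ hNe (by norm_num) hCpos.le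
              rw [hC]
              have h54 : (0:ℝ) ≤ 4 * C₁^2 * (54:ℝ) ^ (ε/2 : ℝ) := by positivity
              linarith
  · -- main case
    set Mn : ℕ := M.toNat with hMn
    have hMnZ : (Mn : ℤ) = M := Int.toNat_of_nonneg hM1.le
    have hMn1 : 1 ≤ Mn := by omega
    have hMZ1 : (1:ℤ) ≤ M := hM1
    -- size bound on Mn
    have hvbound : v ≤ 3 * (N:ℤ)^2 := by
      obtain ⟨h1, h2, h3, _, hsq⟩ := ht₀
      nlinarith [sq_nonneg t₀.1, sq_nonneg t₀.2.1, sq_nonneg t₀.2.2]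
    have hMbound : Mn ≤ 54 * N^2 := by
      have : M ≤ 54 * (N:ℤ)^2 := by nlinarith [sq_nonneg u]
      have h54 : ((54 * N^2 : ℕ) : ℤ) = 54 * (N:ℤ)^2 := by push_cast; ring
      omega
    -- injection into reps
    have hcard : Nat.card T ≤ (stmt9reps M).card := by
      have : Nat.card T ≤ Nat.card {p : ℤ × ℤ // p ∈ stmt9reps M} := by
        apply Nat.card_le_card_of_injective
          (fun t : T => (⟨(6*t.1.1 + 3*t.1.2.1 - 3*u, 3*t.1.2.1 - u), by
            rw [stmt9mem_reps hMZ1]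
            exact hkey t⟩ : {p : ℤ × ℤ // p ∈ stmt9reps M}))
        intro t t' h
        have h1 := congrArg (fun p => p.1.1) h
        have h2 := congrArg (fun p => p.1.2) h
        simp only at h1 h2
        exact hinj t t' h1 h2
      rwa [Nat.card_eq_finsetCard] at this
    have hrc : (stmt9reps M).card ≤ 4 * Mn.divisors.card * Mn.divisors.card := by
      have := stmt9reps_card Mn hMn1
      rwa [hMnZ] at this
    have hd : (Mn.divisors.card : ℝ) ≤ C₁ * (Mn:ℝ) ^ (ε/4 : ℝ) := hdiv Mn hMn1
    have hMnR : (Mn : ℝ) ≤ 54 * (N:ℝ)^2 := by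
      have : ((Mn:ℕ):ℝ) ≤ ((54 * N^2 : ℕ) : ℝ) := by exact_mod_cast hMbound
      push_cast at this
      linarith
    have hrpow : (Mn:ℝ) ^ (ε/4 : ℝ) ≤ (54:ℝ) ^ (ε/4 : ℝ) * (N:ℝ) ^ (ε/2 : ℝ) := by
      calc (Mn:ℝ) ^ (ε/4 : ℝ) ≤ (54 * (N:ℝ)^2) ^ (ε/4 : ℝ) := by
            apply Real.rpow_le_rpow (by positivity) hMnR (by positivity)
        _ = (54:ℝ) ^ (ε/4 : ℝ) * ((N:ℝ)^2) ^ (ε/4 : ℝ) :=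
            Real.mul_rpow (by norm_num) (by positivity)
        _ = (54:ℝ) ^ (ε/4 : ℝ) * (N:ℝ) ^ (ε/2 : ℝ) := by
            rw [← Real.rpow_natCast (N:ℝ) 2, ← Real.rpow_mul (by positivity)]
            have h24 : ((2:ℕ):ℝ) * (ε/4) = ε/2 := by push_cast; ring
            rw [h24]
    have hfinal : (Nat.card T : ℝ) ≤ 4 * (C₁ * ((54:ℝ) ^ (ε/4 : ℝ) * (N:ℝ) ^ (ε/2 : ℝ)))^2 := by
      have hc1 : (Nat.card T : ℝ) ≤ 4 * (Mn.divisors.card : ℝ) * (Mn.divisors.card : ℝ) := by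
        have : Nat.card T ≤ 4 * Mn.divisors.card * Mn.divisors.card := le_trans hcard hrc
        exact_mod_cast this
      have hd2 : (Mn.divisors.card : ℝ) ≤ C₁ * ((54:ℝ) ^ (ε/4 : ℝ) * (N:ℝ) ^ (ε/2 : ℝ)) := by
        calc (Mn.divisors.card : ℝ) ≤ C₁ * (Mn:ℝ) ^ (ε/4 : ℝ) := hd
          _ ≤ C₁ * ((54:ℝ) ^ (ε/4 : ℝ) * (N:ℝ) ^ (ε/2 : ℝ)) := by
              apply mul_le_mul_of_nonneg_left hrpow (by linarith)
      nlinarith [show (0:ℝ) ≤ (Mn.divisors.card : ℝ) from Nat.cast_nonneg _,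
        show (0:ℝ) ≤ (Nat.card T : ℝ) from Nat.cast_nonneg _]
    calc (Nat.card T : ℝ) ≤ 4 * (C₁ * ((54:ℝ) ^ (ε/4 : ℝ) * (N:ℝ) ^ (ε/2 : ℝ)))^2 := hfinal
      _ = 4 * C₁^2 * (54:ℝ) ^ (ε/2 : ℝ) * (N:ℝ) ^ ε := by
          rw [mul_pow, mul_pow, ← Real.rpow_natCast ((54:ℝ) ^ (ε/4:ℝ)) 2,
            ← Real.rpow_natCast ((N:ℝ) ^ (ε/2:ℝ)) 2,
            ← Real.rpow_mul (by norm_num), ← Real.rpow_mul (by positivity)]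
          norm_num
          ring
      _ ≤ C * (N:ℝ) ^ ε := by
          have h0 : (0:ℝ) ≤ (N:ℝ) ^ ε := Real.rpow_nonneg (by positivity) ε
          have h1 : 4 * C₁^2 * (54:ℝ) ^ (ε/2 : ℝ) ≤ C := by rw [hC]; linarith
          exact mul_le_mul_of_nonneg_right h1 h0
end

section
/- As n → ∞, the sum of Euler's totient function over odd integers up to n satisfies ∑_{j ≤ n, j odd} φ(j) = (1 + o(1)) · (ζ/4) · n², where ζ := ∑_{m odd} μ(m)/m². -/
open Filter Finset

/-- Sum of odd numbers in `Icc 1 m` equals `((m+1)/2)^2`. -/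
lemma aux_sum_odd_Icc (m : ℕ) :
    ∑ q ∈ (Finset.Icc 1 m).filter (fun q => Odd q), q = ((m + 1) / 2) ^ 2 := by
  induction m with
  | zero => simp
  | succ m ih =>
    have hins : Finset.Icc 1 (m + 1) = insert (m + 1) (Finset.Icc 1 m) := by
      ext x; simp only [Finset.mem_Icc, Finset.mem_insert]; omega
    rw [hins, Finset.filter_insert]
    by_cases h : Odd (m + 1)
    · rw [if_pos h, Finset.sum_insert (by simp), ih]
      obtain ⟨k, hk⟩ := h
      have h1 : (m + 1) / 2 = k := by omega
      have h2 : (m + 1 + 1) / 2 = k + 1 := by omega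
      rw [h1, h2, hk]; ring
    · rw [if_neg h, ih]
      have : Even (m + 1) := Nat.not_odd_iff_even.mp h
      obtain ⟨k, hk⟩ := this
      have h1 : (m + 1) / 2 = k := by omega
      have h2 : (m + 1 + 1) / 2 = k := by omega
      rw [h1, h2]

/-- Möbius inversion for the totient. -/
lemma aux_totient_eq (j : ℕ) (hj : 0 < j) :
    (Nat.totient j : ℝ) =
      ∑ p ∈ j.divisorsAntidiagonal, (ArithmeticFunction.moebius p.1 : ℝ) * (p.2 : ℝ) := by
  have h := (ArithmeticFunction.sum_eq_iff_sum_mul_moebius_eq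
    (R := ℝ) (f := fun j => (Nat.totient j : ℝ)) (g := fun j => (j : ℝ))).mp ?_ j hj
  · exact h.symm
  · intro n hn
    exact_mod_cast congrArg (Nat.cast : ℕ → ℝ) (Nat.sum_totient n)

/-- The key finite identity. -/
lemma aux_key (n : ℕ) :
    ∑ j ∈ (Finset.Icc 1 n).filter (fun j => Odd j), (Nat.totient j : ℝ)
      = ∑ d ∈ (Finset.Icc 1 n).filter (fun d => Odd d),
          (ArithmeticFunction.moebius d : ℝ) * (((n / d + 1) / 2 : ℕ) : ℝ) ^ 2 := by
  set T : Finset (ℕ × ℕ) :=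
    ((Finset.Icc 1 n) ×ˢ (Finset.Icc 1 n)).filter
      (fun p => Odd p.1 ∧ Odd p.2 ∧ p.1 * p.2 ≤ n) with hT
  have memT : ∀ p : ℕ × ℕ, p ∈ T ↔
      (1 ≤ p.1 ∧ Odd p.1 ∧ Odd p.2 ∧ 1 ≤ p.2 ∧ p.1 * p.2 ≤ n) := by
    intro p
    simp only [hT, Finset.mem_filter, Finset.mem_product, Finset.mem_Icc]
    constructor
    · rintro ⟨⟨⟨h1, h2⟩, h3, h4⟩, h5, h6, h7⟩
      exact ⟨h1, h5, h6, h3, h7⟩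
    · rintro ⟨h1, h5, h6, h3, h7⟩
      refine ⟨⟨⟨h1, ?_⟩, h3, ?_⟩, h5, h6, h7⟩
      · calc p.1 ≤ p.1 * p.2 := Nat.le_mul_of_pos_right _ (by omega)
          _ ≤ n := h7
      · calc p.2 ≤ p.1 * p.2 := Nat.le_mul_of_pos_left _ (by omega)
          _ ≤ n := h7
  -- LHS = sum over T
  have hL : ∑ j ∈ (Finset.Icc 1 n).filter (fun j => Odd j), (Nat.totient j : ℝ)
      = ∑ p ∈ T, (ArithmeticFunction.moebius p.1 : ℝ) * (p.2 : ℝ) := by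
    rw [Finset.sum_congr rfl (fun j hj => aux_totient_eq j ?_), Finset.sum_sigma']
    · refine Finset.sum_nbij' (fun x => x.2) (fun p => ⟨p.1 * p.2, p⟩) ?_ ?_ ?_ ?_ ?_
      · rintro ⟨j, p⟩ hx
        simp only [Finset.mem_sigma, Finset.mem_filter, Finset.mem_Icc,
          Nat.mem_divisorsAntidiagonal] at hx
        obtain ⟨⟨⟨hj1, hj2⟩, hjodd⟩, hpq, hj0⟩ := hx
        rw [memT]
        rw [← hpq] at hjodd hj2
        have h1 := (Nat.odd_mul.mp hjodd).1
        have h2 := (Nat.odd_mul.mp hjodd).2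
        exact ⟨h1.pos, h1, h2, h2.pos, hj2⟩
      · intro p hp
        rw [memT] at hp
        obtain ⟨h1, h2, h3, h4, h5⟩ := hp
        have hpos : 1 ≤ p.1 * p.2 := Nat.one_le_iff_ne_zero.mpr
          (Nat.mul_ne_zero (by omega) (by omega))
        refine Finset.mem_sigma.mpr ⟨Finset.mem_filter.mpr ⟨Finset.mem_Icc.mpr
          ⟨hpos, h5⟩, Nat.odd_mul.mpr ⟨h2, h3⟩⟩,
          Nat.mem_divisorsAntidiagonal.mpr ⟨rfl, Nat.one_le_iff_ne_zero.mp hpos⟩⟩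
      · rintro ⟨j, p⟩ hx
        simp only [Finset.mem_sigma, Nat.mem_divisorsAntidiagonal] at hx
        simp [hx.2.1]
      · intro p _; rfl
      · intro x _; rfl
    · simp only [Finset.mem_filter, Finset.mem_Icc] at hj
      omega
  -- RHS = sum over T
  have hR : ∑ d ∈ (Finset.Icc 1 n).filter (fun d => Odd d),
        (ArithmeticFunction.moebius d : ℝ) * (((n / d + 1) / 2 : ℕ) : ℝ) ^ 2
      = ∑ p ∈ T, (ArithmeticFunction.moebius p.1 : ℝ) * (p.2 : ℝ) := by
    have step : ∀ d : ℕ, (((n / d + 1) / 2 : ℕ) : ℝ) ^ 2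
        = ∑ q ∈ (Finset.Icc 1 (n / d)).filter (fun q => Odd q), (q : ℝ) := by
      intro d
      rw [← Nat.cast_sum]
      exact_mod_cast congrArg (Nat.cast : ℕ → ℝ) (aux_sum_odd_Icc (n / d)).symm
    calc ∑ d ∈ (Finset.Icc 1 n).filter (fun d => Odd d),
          (ArithmeticFunction.moebius d : ℝ) * (((n / d + 1) / 2 : ℕ) : ℝ) ^ 2
        = ∑ d ∈ (Finset.Icc 1 n).filter (fun d => Odd d),
            ∑ q ∈ (Finset.Icc 1 (n / d)).filter (fun q => Odd q),
              (ArithmeticFunction.moebius d : ℝ) * (q : ℝ) := by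
          refine Finset.sum_congr rfl (fun d _ => ?_)
          rw [step d, Finset.mul_sum]
      _ = ∑ p ∈ T, (ArithmeticFunction.moebius p.1 : ℝ) * (p.2 : ℝ) := by
          rw [Finset.sum_sigma']
          refine Finset.sum_nbij' (fun x => (x.1, x.2)) (fun p => ⟨p.1, p.2⟩) ?_ ?_ ?_ ?_ ?_
          · rintro ⟨d, q⟩ hx
            simp only [Finset.mem_sigma, Finset.mem_filter, Finset.mem_Icc] at hx
            obtain ⟨⟨⟨hd1, hd2⟩, hdodd⟩, ⟨hq1, hq2⟩, hqodd⟩ := hx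
            rw [memT]
            refine ⟨hd1, hdodd, hqodd, hq1, ?_⟩
            calc d * q ≤ d * (n / d) := Nat.mul_le_mul_left d hq2
              _ ≤ n := Nat.mul_div_le n d
          · intro p hp
            rw [memT] at hp
            obtain ⟨h1, h2, h3, h4, h5⟩ := hp
            simp only [Finset.mem_sigma, Finset.mem_filter, Finset.mem_Icc]
            refine ⟨⟨⟨h1, ?_⟩, h2⟩, ⟨h4, ?_⟩, h3⟩
            · calc p.1 ≤ p.1 * p.2 := Nat.le_mul_of_pos_right _ (by omega)
                _ ≤ n := h5
            · exact (Nat.le_div_iff_mul_le (by omega)).mpr (by rw [Nat.mul_comm]; exact h5)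
          · intro x _; rfl
          · intro p _; rfl
          · intro x _; rfl
  rw [hL, hR]

/-- ∑_{j ≤ n, j odd} φ(j) = (1 + o(1)) (ζ/4) n² as n → ∞, where
ζ = ∑_{m odd} μ(m)/m². -/
theorem stmt_15 :
    Filter.Tendsto
      (fun n : ℕ =>
        (∑ j ∈ (Finset.Icc 1 n).filter (fun j => Odd j), (Nat.totient j : ℝ)) / (n : ℝ) ^ 2)
      Filter.atTop
      (nhds ((∑' m : ℕ, if Odd m then (ArithmeticFunction.moebius m : ℝ) / (m : ℝ) ^ 2 else 0) / 4)) := by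
  set F : ℕ → ℕ → ℝ := fun n d =>
    if Odd d then (ArithmeticFunction.moebius d : ℝ) * ((((n / d + 1) / 2 : ℕ) : ℝ) / (n : ℝ)) ^ 2
    else 0 with hF
  set G : ℕ → ℝ := fun d =>
    if Odd d then (ArithmeticFunction.moebius d : ℝ) * (1 / (2 * (d : ℝ))) ^ 2 else 0 with hG
  -- c/n bounds
  have hcub : ∀ n d : ℕ, 1 ≤ d → ((((n / d + 1) / 2 : ℕ) : ℝ)) ≤ (n : ℝ) / (2 * d) + 1 / 2 := by
    intro n d hd
    have h2 : (2 * ((n / d + 1) / 2) : ℕ) ≤ n / d + 1 := by omega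
    have h3 : ((n / d : ℕ) : ℝ) ≤ (n : ℝ) / d := Nat.cast_div_le
    have h4 : (2 * ((n / d + 1) / 2 : ℕ) : ℝ) ≤ ((n / d : ℕ) : ℝ) + 1 := by exact_mod_cast h2
    have hd' : (0 : ℝ) < d := by exact_mod_cast hd
    push_cast at h4
    have : (n : ℝ) / (2 * d) = ((n : ℝ) / d) / 2 := by ring
    rw [this]
    linarith
  have hclb : ∀ n d : ℕ, 1 ≤ d → (n : ℝ) / (2 * d) - 1 ≤ ((((n / d + 1) / 2 : ℕ) : ℝ)) := by
    intro n d hd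
    have h2 : (n / d : ℕ) ≤ 2 * ((n / d + 1) / 2 : ℕ) := by omega
    have h3 : n < n / d * d + d := Nat.lt_div_mul_add (by omega)
    have h3' : (n : ℝ) < ((n / d : ℕ) : ℝ) * d + d := by exact_mod_cast h3
    have h2' : ((n / d : ℕ) : ℝ) ≤ 2 * ((((n / d + 1) / 2 : ℕ) : ℝ)) := by exact_mod_cast h2
    have hd' : (0 : ℝ) < d := by exact_mod_cast hd
    rw [sub_le_iff_le_add, div_le_iff₀ (by positivity)]
    nlinarith
  -- eventual equality
  have heq : ∀ᶠ n : ℕ in atTop,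
      (∑ j ∈ (Finset.Icc 1 n).filter (fun j => Odd j), (Nat.totient j : ℝ)) / (n : ℝ) ^ 2
        = ∑' d, F n d := by
    filter_upwards [eventually_ge_atTop 1] with n hn
    have hzero : ∀ d ∉ (Finset.Icc 1 n).filter (fun d => Odd d), F n d = 0 := by
      intro d hd
      simp only [Finset.mem_filter, Finset.mem_Icc, not_and, not_le] at hd
      by_cases hodd : Odd d
      · have hd1 : 1 ≤ d := hodd.pos
        have : n < d := by
          by_contra hcon
          exact absurd hodd (hd ⟨hd1, by omega⟩)
        have : n / d = 0 := Nat.div_eq_of_lt this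
        simp [hF, hodd, this]
      · simp [hF, hodd]
    rw [tsum_eq_sum hzero, aux_key n, Finset.sum_div]
    refine Finset.sum_congr rfl (fun d hd => ?_)
    simp only [Finset.mem_filter] at hd
    rw [hF]
    simp only [if_pos hd.2]
    rw [div_pow, mul_div_assoc]
  refine Filter.Tendsto.congr' (Filter.EventuallyEq.symm heq) ?_
  -- show tsum G = target
  have hGsum : (∑' m : ℕ, if Odd m then (ArithmeticFunction.moebius m : ℝ) / (m : ℝ) ^ 2 else 0) / 4
      = ∑' d, G d := by
    rw [div_eq_mul_inv, ← tsum_mul_right]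
    refine tsum_congr (fun d => ?_)
    rw [hG]
    by_cases hodd : Odd d
    · have hd : (0 : ℝ) < d := by exact_mod_cast hodd.pos
      simp only [if_pos hodd]
      have h : ((2:ℝ) * d) ^ 2 = (d : ℝ) ^ 2 * 4 := by ring
      rw [one_div, inv_pow, h, mul_inv, div_eq_mul_inv, mul_assoc]
    · simp [hodd]
  rw [hGsum]
  -- dominated convergence
  refine tendsto_tsum_of_dominated_convergence
    (bound := fun d : ℕ => 1 / (d : ℝ) ^ 2) ?_ ?_ ?_
  · exact Real.summable_one_div_nat_pow.mpr one_lt_two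
  · -- pointwise convergence
    intro d
    by_cases hodd : Odd d
    · simp only [hF, hG, if_pos hodd]
      have hd1 : 1 ≤ d := hodd.pos
      have hd' : (0 : ℝ) < d := by exact_mod_cast hd1
      refine Tendsto.const_mul _ (Tendsto.pow ?_ 2)
      -- c n / n → 1/(2d)
      have hlow : Tendsto (fun n : ℕ => 1 / (2 * (d : ℝ)) - 1 / (n : ℝ)) atTop
          (nhds (1 / (2 * (d : ℝ)))) := by
        have : Tendsto (fun n : ℕ => 1 / (n : ℝ)) atTop (nhds 0) := tendsto_one_div_atTop_nhds_zero_nat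
        simpa using tendsto_const_nhds.sub this
      have hhigh : Tendsto (fun n : ℕ => 1 / (2 * (d : ℝ)) + 1 / (n : ℝ)) atTop
          (nhds (1 / (2 * (d : ℝ)))) := by
        have : Tendsto (fun n : ℕ => 1 / (n : ℝ)) atTop (nhds 0) := tendsto_one_div_atTop_nhds_zero_nat
        simpa using tendsto_const_nhds.add this
      refine tendsto_of_tendsto_of_tendsto_of_le_of_le' hlow hhigh ?_ ?_
      · filter_upwards [eventually_ge_atTop 1] with n hn
        have hn' : (0 : ℝ) < n := by exact_mod_cast hn
        rw [le_div_iff₀ hn']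
        have e : (1 / (2 * (d : ℝ)) - 1 / n) * n = (n : ℝ) / (2 * d) - 1 := by
          field_simp
        rw [e]
        exact hclb n d hd1
      · filter_upwards [eventually_ge_atTop 1] with n hn
        have hn' : (0 : ℝ) < n := by exact_mod_cast hn
        rw [div_le_iff₀ hn']
        have e : (1 / (2 * (d : ℝ)) + 1 / n) * n = (n : ℝ) / (2 * d) + 1 := by
          field_simp
        rw [e]
        linarith [hcub n d hd1]
    · simp only [hF, hG, if_neg hodd]
      exact tendsto_const_nhds
  · -- domination
    filter_upwards [eventually_ge_atTop 1] with n hn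
    intro d
    by_cases hodd : Odd d
    · have hd1 : 1 ≤ d := hodd.pos
      have hd' : (0 : ℝ) < d := by exact_mod_cast hd1
      have hn' : (0 : ℝ) < n := by exact_mod_cast hn
      simp only [hF, if_pos hodd, norm_mul, norm_pow]
      have hmu : ‖(ArithmeticFunction.moebius d : ℝ)‖ ≤ 1 := by
        rcases ArithmeticFunction.moebius_eq_or d with h | h | h <;> rw [h] <;> norm_num
      have hc0 : (0 : ℝ) ≤ (((n / d + 1) / 2 : ℕ) : ℝ) := Nat.cast_nonneg _
      have hfrac : ‖(((n / d + 1) / 2 : ℕ) : ℝ) / (n : ℝ)‖ ≤ 1 / (d : ℝ) := by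
        rw [Real.norm_eq_abs, abs_of_nonneg (by positivity)]
        by_cases hdn : d ≤ n
        · have hdn' : (d : ℝ) ≤ n := by exact_mod_cast hdn
          have hc : (((n / d + 1) / 2 : ℕ) : ℝ) ≤ (n : ℝ) / d := by
            have := hcub n d hd1
            have h12 : (1 : ℝ) / 2 ≤ (n : ℝ) / (2 * d) := by
              rw [div_le_div_iff₀ (by norm_num) (by positivity)]
              nlinarith
            have : (n : ℝ) / (2 * d) + (n : ℝ) / (2 * d) = (n : ℝ) / d := by ring
            linarith [hcub n d hd1]
          rw [div_le_div_iff₀ hn' hd', one_mul]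
          calc (((n / d + 1) / 2 : ℕ) : ℝ) * d ≤ ((n : ℝ) / d) * d := by
                exact mul_le_mul_of_nonneg_right hc (le_of_lt hd')
            _ = n := by field_simp
        · have : n / d = 0 := Nat.div_eq_of_lt (by omega)
          simp only [this]
          norm_num
      calc ‖(ArithmeticFunction.moebius d : ℝ)‖ * ‖(((n / d + 1) / 2 : ℕ) : ℝ) / (n : ℝ)‖ ^ 2
          ≤ 1 * (1 / (d : ℝ)) ^ 2 := by
            refine mul_le_mul hmu (pow_le_pow_left₀ (norm_nonneg _) hfrac 2) (by positivity) (by norm_num)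
        _ = 1 / (d : ℝ) ^ 2 := by rw [one_mul, div_pow, one_pow]
    · simp only [hF, if_neg hodd, norm_zero]
      positivity
end
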